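/- arXiv:2505.16357 — 2 statements merged into one kernel-verified Lean document; each statement's English description precedes it below -/
import Mathlib

section
/- Let G=(V,E) be a finite directed graph with initial vertex v_init ∈ V, and let M_G be the MDP constructed from (G, v_init) as in the Hamiltonian-path reduction. Then for every ε with 0 ≤ ε < 1/2^{|V|+1}: G has a Hamiltonian path starting at v_init if and only if there exist memoryless deterministic schedulers σ₁, σ₂ of M_G with |Pr^{σ₁}_{s₀}(◇{s_a}) − Pr^{σ₂}_{s₀}(◇{s_b})| ≤ ε. -/
open scoped BigOperators Classical
open Filter

/-- A finite history: an initial state together with a list of (action, next-state) steps. -/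
abbrev Hist (S A : Type*) : Type _ := S × List (A × S)

/-- The last state of a history. -/
def Hist.last {S A : Type*} (π : Hist S A) : S :=
  (π.2.getLast?).elim π.1 Prod.snd

/-- A Markov decision process with finite state space `S` and finite action space `A`:
`P s a s'` is the transition probability, each state has at least one enabled action
(an action whose outgoing probabilities sum to `1`), and the outgoing probabilities
of a non-enabled action sum to `0`. -/
structure MDP (S A : Type*) [Fintype S] [Fintype A] where
  P : S → A → S → ℝ
  nonneg : ∀ s a s', 0 ≤ P s a s'
  le_one : ∀ s a s', P s a s' ≤ 1
  sum_cases : ∀ s a, (∑ s', P s a s') = 1 ∨ (∑ s', P s a s') = 0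
  exists_enabled : ∀ s, ∃ a, (∑ s', P s a s') = 1

namespace MDP

variable {S A : Type*} [Fintype S] [Fintype A]

/-- Action `a` is enabled in state `s`. -/
def enabled (M : MDP S A) (s : S) (a : A) : Prop := (∑ s', M.P s a s') = 1

/-- A state is absorbing if every enabled action loops on it with probability 1. -/
def Absorbing (M : MDP S A) (s : S) : Prop := ∀ a, M.enabled s a → M.P s a s = 1

end MDP

/-- A (history-dependent, randomized) scheduler for `M`: it assigns to every finite
history a probability distribution over the actions enabled at its last state. -/
structure Scheduler {S A : Type*} [Fintype S] [Fintype A] (M : MDP S A) where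
  choice : Hist S A → A → ℝ
  nonneg : ∀ π a, 0 ≤ choice π a
  sum_one : ∀ π, (∑ a, choice π a) = 1
  supp : ∀ π a, ¬ M.enabled (Hist.last π) a → choice π a = 0

namespace Scheduler

variable {S A : Type*} [Fintype S] [Fintype A] {M : MDP S A}

/-- A scheduler is memoryless if its choice only depends on the last state of the history. -/
def Memoryless (σ : Scheduler M) : Prop :=
  ∀ π π' : Hist S A, Hist.last π = Hist.last π' → σ.choice π = σ.choice π'

/-- A scheduler is deterministic if all its choice probabilities are 0 or 1. -/
def Deterministic (σ : Scheduler M) : Prop :=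
  ∀ π a, σ.choice π a = 0 ∨ σ.choice π a = 1

/-- Memoryless deterministic (MD) schedulers. -/
def MD (σ : Scheduler M) : Prop := σ.Memoryless ∧ σ.Deterministic

end Scheduler

/-- Probability of reaching the target set `T` within `n` steps, starting from history `π`,
under scheduler `σ`. -/
noncomputable def reachN {S A : Type*} [Fintype S] [Fintype A] (M : MDP S A)
    (σ : Scheduler M) (T : Set S) : ℕ → Hist S A → ℝ
  | 0, π => if Hist.last π ∈ T then 1 else 0
  | n + 1, π =>
      if Hist.last π ∈ T then 1
      else ∑ a, σ.choice π a * ∑ s', M.P (Hist.last π) a s' *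
        reachN M σ T n (π.1, π.2 ++ [(a, s')])

/-- `Pr M σ s T` is the probability of eventually reaching `T` from state `s` under
scheduler `σ`: the supremum of the step-bounded reachability probabilities. -/
noncomputable def Pr {S A : Type*} [Fintype S] [Fintype A] (M : MDP S A)
    (σ : Scheduler M) (s : S) (T : Set S) : ℝ :=
  ⨆ n : ℕ, reachN M σ T n (s, [])

/-- States of the Hamiltonian-path reduction MDP: the vertices `V`, the chain states
`s₀, s₁, …, s_{|V|−1}` (encoded as `Fin (card V)`), and the three extra states
`s_⊥, s_a, s_b` (encoded as `Fin 3`: `0 = s_⊥`, `1 = s_a`, `2 = s_b`). -/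
abbrev HSt (V : Type*) [Fintype V] : Type _ := V ⊕ (Fin (Fintype.card V) ⊕ Fin 3)

/-- Actions of the Hamiltonian-path reduction MDP: `none` is `τ` and `some (v, v')`
is the action associated with the edge `(v, v')`. -/
abbrev HAct (V : Type*) : Type _ := Option (V × V)

/-- The initial state `s₀` (the first chain state). -/
def hs0 (V : Type*) [Fintype V] [Nonempty V] : HSt V :=
  Sum.inr (Sum.inl ⟨0, Fintype.card_pos⟩)

/-- The absorbing state `s_⊥`. -/
def hsBot (V : Type*) [Fintype V] : HSt V := Sum.inr (Sum.inr 0)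

/-- The absorbing state `s_a`. -/
def hsA (V : Type*) [Fintype V] : HSt V := Sum.inr (Sum.inr 1)

/-- The absorbing state `s_b`. -/
def hsB (V : Type*) [Fintype V] : HSt V := Sum.inr (Sum.inr 2)

/-- The transition function of the Hamiltonian-path reduction MDP for a directed graph
`(V, E)` with initial vertex `vinit`:
`P(s₀,τ,vinit) = P(s₀,τ,s₁) = 1/2`; `P(sᵢ,τ,s_{i+1}) = P(sᵢ,τ,s_⊥) = 1/2` for
`1 ≤ i ≤ |V|−2`; `P(s_{|V|−1},τ,s_b) = P(s_{|V|−1},τ,s_⊥) = 1/2`; for `(v,v') ∈ E`,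
`P(v,(v,v'),v') = P(v,(v,v'),s_⊥) = 1/2`; `P(v,τ,s_a) = 1`; `s_⊥, s_a, s_b` absorbing. -/
noncomputable def hamP {V : Type*} [Fintype V] [DecidableEq V]
    (E : Set (V × V)) (vinit : V) : HSt V → HAct V → HSt V → ℝ := fun x act y =>
  match x, act with
  | Sum.inl v, none => if y = hsA V then 1 else 0
  | Sum.inl v, some (u, u') =>
      if u = v ∧ (u, u') ∈ E then
        (if y = Sum.inl u' then (1 : ℝ) / 2 else 0) +
          (if y = hsBot V then (1 : ℝ) / 2 else 0)
      else 0
  | Sum.inr (Sum.inl i), none =>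
      (if y = (if (i : ℕ) = 0 then Sum.inl vinit else hsBot V) then (1 : ℝ) / 2 else 0) +
        (if h : (i : ℕ) + 1 < Fintype.card V then
            (if y = Sum.inr (Sum.inl ⟨(i : ℕ) + 1, h⟩) then (1 : ℝ) / 2 else 0)
          else (if y = hsB V then (1 : ℝ) / 2 else 0))
  | Sum.inr (Sum.inl _), some _ => 0
  | Sum.inr (Sum.inr e), none => if y = Sum.inr (Sum.inr e) then 1 else 0
  | Sum.inr (Sum.inr _), some _ => 0

/-- `l` is a Hamiltonian path of the graph `(V, E)` starting at `vinit`: it lists every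
vertex exactly once, starts at `vinit`, and follows edges of `E`. -/
def IsHamPath {V : Type*} [Fintype V] (E : Set (V × V)) (vinit : V) (l : List V) : Prop :=
  l.Nodup ∧ l.length = Fintype.card V ∧ l.head? = some vinit ∧
    l.Chain' (fun u u' => (u, u') ∈ E)


/-! ### Auxiliary general lemmas -/

section GeneralAux

variable {S A : Type*} [Fintype S] [Fintype A] {M : MDP S A} {σ : Scheduler M} {T : Set S}

lemma Hist.last_nil (s : S) : Hist.last ((s, ([] : List (A × S))) : Hist S A) = s := rfl

lemma Hist.last_snoc (π : Hist S A) (a : A) (s' : S) :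
    Hist.last ((π.1, π.2 ++ [(a, s')]) : Hist S A) = s' := by
  simp [Hist.last]

lemma reachN_nonneg : ∀ (m : ℕ) (π : Hist S A), 0 ≤ reachN M σ T m π := by
  intro m
  induction m with
  | zero => intro π; rw [reachN]; positivity
  | succ m ih =>
      intro π
      rw [reachN]
      split
      · norm_num
      · refine Finset.sum_nonneg fun a _ => mul_nonneg (σ.nonneg π a) ?_
        exact Finset.sum_nonneg fun s' _ => mul_nonneg (M.nonneg _ _ _) (ih _)

lemma sum_P_le_one (s : S) (a : A) : (∑ s', M.P s a s') ≤ 1 := by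
  rcases M.sum_cases s a with h | h <;> rw [h] <;> norm_num

lemma reachN_le_one : ∀ (m : ℕ) (π : Hist S A), reachN M σ T m π ≤ 1 := by
  intro m
  induction m with
  | zero => intro π; rw [reachN]; split <;> norm_num
  | succ m ih =>
      intro π
      rw [reachN]
      split
      · exact le_refl 1
      · calc (∑ a, σ.choice π a * ∑ s', M.P (Hist.last π) a s' *
              reachN M σ T m (π.1, π.2 ++ [(a, s')]))
            ≤ ∑ a, σ.choice π a * 1 := by
              refine Finset.sum_le_sum fun a _ => mul_le_mul_of_nonneg_left ?_ (σ.nonneg π a)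
              calc (∑ s', M.P (Hist.last π) a s' * reachN M σ T m (π.1, π.2 ++ [(a, s')]))
                  ≤ ∑ s', M.P (Hist.last π) a s' * 1 := by
                    refine Finset.sum_le_sum fun s' _ =>
                      mul_le_mul_of_nonneg_left (ih _) (M.nonneg _ _ _)
                _ ≤ 1 := by simpa using sum_P_le_one (M := M) (Hist.last π) a
          _ = 1 := by simpa using σ.sum_one π

lemma reachN_mem (h : Hist.last π ∈ T) : ∀ m, reachN M σ T m π = 1 := by
  intro m; cases m <;> rw [reachN] <;> simp [h]

lemma Pr_eq {s : S} {c : ℝ} (hub : ∀ m, reachN M σ T m ((s, []) : Hist S A) ≤ c)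
    (hex : ∃ m, reachN M σ T m ((s, []) : Hist S A) = c) : Pr M σ s T = c := by
  refine le_antisymm (ciSup_le hub) ?_
  obtain ⟨m, hm⟩ := hex
  rw [← hm]
  exact le_ciSup ⟨c, by rintro x ⟨k, rfl⟩; exact hub k⟩ m

lemma reach_invariant (C : Set S) (hdis : ∀ s ∈ C, s ∉ T)
    (hstep : ∀ s ∈ C, ∀ a s', M.P s a s' ≠ 0 → s' ∈ C) :
    ∀ (m : ℕ) (π : Hist S A), Hist.last π ∈ C → reachN M σ T m π = 0 := by
  intro m
  induction m with
  | zero => intro π h; rw [reachN]; simp [hdis _ h]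
  | succ m ih =>
      intro π h
      rw [reachN, if_neg (hdis _ h)]
      refine Finset.sum_eq_zero fun a _ => ?_
      have hz : (∑ s', M.P (Hist.last π) a s' *
          reachN M σ T m ((π.1, π.2 ++ [(a, s')]) : Hist S A)) = 0 := by
        refine Finset.sum_eq_zero fun s' _ => ?_
        by_cases hP : M.P (Hist.last π) a s' = 0
        · rw [hP, zero_mul]
        · rw [ih _ (by rw [Hist.last_snoc]; exact hstep _ h a s' hP), mul_zero]
      rw [hz, mul_zero]

/-- `g` is the action-selection function of the scheduler `σ`. -/
abbrev IsActOf (σ : Scheduler M) (g : S → A) : Prop :=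
  ∀ (π : Hist S A) (a : A), σ.choice π a = if a = g (Hist.last π) then 1 else 0

/-- Every MD scheduler is given by an indicator of an action-selection function. -/
lemma exists_actfun (hσ : σ.MD) : ∃ g : S → A, IsActOf σ g := by
  have h1 : ∀ s : S, ∃ a, σ.choice ((s, []) : Hist S A) a = 1 := by
    intro s
    by_contra hc
    push_neg at hc
    have h0 : ∀ a, σ.choice ((s, []) : Hist S A) a = 0 :=
      fun a => (hσ.2 _ a).resolve_right (hc a)
    have := σ.sum_one ((s, []) : Hist S A)
    simp [h0] at this
  choose g hg using h1
  refine ⟨g, fun π a => ?_⟩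
  have hml : σ.choice π = σ.choice ((Hist.last π, []) : Hist S A) :=
    hσ.1 π _ (by rw [Hist.last_nil])
  by_cases ha : a = g (Hist.last π)
  · subst ha; rw [if_pos rfl, hml, hg]
  · rw [if_neg ha, hml]
    by_contra hne
    have h1' : σ.choice ((Hist.last π, []) : Hist S A) a = 1 :=
      (hσ.2 _ a).resolve_left hne
    have h2 : (2 : ℝ) ≤ ∑ b, σ.choice ((Hist.last π, []) : Hist S A) b := by
      calc (2 : ℝ) = ∑ b ∈ ({a, g (Hist.last π)} : Finset A),
            σ.choice ((Hist.last π, []) : Hist S A) b := by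
            rw [Finset.sum_pair ha, h1', hg]; norm_num
        _ ≤ ∑ b, σ.choice ((Hist.last π, []) : Hist S A) b :=
            Finset.sum_le_sum_of_subset_of_nonneg (Finset.subset_univ _)
              (fun b _ _ => σ.nonneg _ b)
    rw [σ.sum_one] at h2
    norm_num at h2

section ActFun

variable (g : S → A) (hg : IsActOf σ g)

include hg

lemma g_enabled (s : S) : M.enabled s (g s) := by
  by_contra h
  have hs := σ.supp ((s, []) : Hist S A) (g s) (by rw [Hist.last_nil]; exact h)
  rw [hg] at hs
  simp [Hist.last_nil] at hs

lemma reachN_g (m : ℕ) (π : Hist S A) (h : Hist.last π ∉ T) :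
    reachN M σ T (m + 1) π = ∑ s', M.P (Hist.last π) (g (Hist.last π)) s' *
      reachN M σ T m ((π.1, π.2 ++ [(g (Hist.last π), s')]) : Hist S A) := by
  rw [reachN, if_neg h]
  simp only [hg, ite_mul, one_mul, zero_mul]
  rw [Finset.sum_ite_eq' Finset.univ]
  simp

lemma reachN_congr : ∀ (m : ℕ) (π π' : Hist S A), Hist.last π = Hist.last π' →
    reachN M σ T m π = reachN M σ T m π' := by
  intro m
  induction m with
  | zero => intro π π' h; rw [reachN, reachN, h]
  | succ m ih =>
      intro π π' h
      by_cases hT : Hist.last π ∈ T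
      · rw [reachN_mem hT, reachN_mem (h ▸ hT)]
      · rw [reachN_g g hg m π hT, reachN_g g hg m π' (h ▸ hT), h]
        exact Finset.sum_congr rfl fun s' _ => by
          rw [ih (π.1, π.2 ++ [(g (Hist.last π'), s')]) (π'.1, π'.2 ++ [(g (Hist.last π'), s')])
            (by rw [Hist.last_snoc, Hist.last_snoc])]

lemma reachN_g' (m : ℕ) (s : S) (h : s ∉ T) :
    reachN M σ T (m + 1) ((s, []) : Hist S A) =
      ∑ s', M.P s (g s) s' * reachN M σ T m ((s', []) : Hist S A) := by
  rw [reachN_g g hg m _ (by rwa [Hist.last_nil]), Hist.last_nil]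
  exact Finset.sum_congr rfl fun s' _ => by
    rw [reachN_congr g hg m _ ((s', []) : Hist S A) (by rw [Hist.last_snoc, Hist.last_nil])]

end ActFun

end GeneralAux

/-! ### Lemmas about the Hamiltonian reduction MDP -/

lemma sum_if_mul {S : Type*} [Fintype S] (x : S) (c : ℝ) (f : S → ℝ) :
    (∑ y, (if y = x then c else 0) * f y) = c * f x := by
  simp [ite_mul, Finset.sum_ite_eq']

section HamAux

variable {V : Type*} [Fintype V] [DecidableEq V] [Nonempty V]
variable {E : Set (V × V)} {vinit : V}
variable {M : MDP (HSt V) (HAct V)} (hM : M.P = hamP E vinit)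
include hM

lemma enabled_tau (s : HSt V) : M.enabled s none := by
  unfold MDP.enabled
  rw [hM]
  match s with
  | Sum.inl v => simp [hamP, Finset.sum_ite_eq']
  | Sum.inr (Sum.inl i) =>
      by_cases h : (i : ℕ) + 1 < Fintype.card V <;>
        simp [hamP, h, Finset.sum_add_distrib, Finset.sum_ite_eq'] <;> norm_num
  | Sum.inr (Sum.inr e) => simp [hamP, Finset.sum_ite_eq']

lemma not_enabled_chain (i : Fin (Fintype.card V)) (p : V × V) :
    ¬ M.enabled (Sum.inr (Sum.inl i) : HSt V) (some p) := by
  unfold MDP.enabled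
  rw [hM]
  simp [hamP]

lemma enabled_vertex {v u u' : V} :
    M.enabled (Sum.inl v : HSt V) (some (u, u')) ↔ u = v ∧ (u, u') ∈ E := by
  unfold MDP.enabled
  rw [hM]
  by_cases h : u = v ∧ (u, u') ∈ E
  · simp [hamP, h, Finset.sum_add_distrib, Finset.sum_ite_eq']
    norm_num
  · simp [hamP, h]

lemma sum_P_vertex_tau (v : V) (f : HSt V → ℝ) :
    (∑ s', M.P (Sum.inl v) none s' * f s') = f (hsA V) := by
  rw [hM]
  simp [hamP, ite_mul, Finset.sum_ite_eq']

lemma sum_P_vertex_edge {v v' : V} (hE : (v, v') ∈ E) (f : HSt V → ℝ) :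
    (∑ s', M.P (Sum.inl v) (some (v, v')) s' * f s') =
      (1/2 : ℝ) * f (Sum.inl v') + (1/2 : ℝ) * f (hsBot V) := by
  rw [hM]
  simp [hamP, hE, add_mul,
    Finset.sum_add_distrib, ite_mul, Finset.sum_ite_eq']

lemma sum_P_chain (i : Fin (Fintype.card V)) (f : HSt V → ℝ) :
    (∑ s', M.P (Sum.inr (Sum.inl i)) none s' * f s') =
      (1/2 : ℝ) * f (if (i : ℕ) = 0 then Sum.inl vinit else hsBot V) +
      (1/2 : ℝ) * f (if h : (i : ℕ) + 1 < Fintype.card V then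
          Sum.inr (Sum.inl ⟨(i : ℕ) + 1, h⟩) else hsB V) := by
  rw [hM]
  by_cases h : (i : ℕ) + 1 < Fintype.card V <;>
    simp [hamP, h, add_mul, Finset.sum_add_distrib, sum_if_mul]

lemma choice_tau_chain (σ : Scheduler M) (π : Hist (HSt V) (HAct V))
    (i : Fin (Fintype.card V)) (h : Hist.last π = Sum.inr (Sum.inl i)) :
    σ.choice π none = 1 := by
  have h1 : ∀ p : V × V, σ.choice π (some p) = 0 :=
    fun p => σ.supp π (some p) (by rw [h]; exact not_enabled_chain hM i p)
  have h2 := σ.sum_one π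
  rw [Fintype.sum_option] at h2
  simpa [h1] using h2

lemma reachN_chain_succ (σ : Scheduler M) (T : Set (HSt V)) (m : ℕ)
    (π : Hist (HSt V) (HAct V)) (i : Fin (Fintype.card V))
    (h : Hist.last π = Sum.inr (Sum.inl i)) (hT : (Sum.inr (Sum.inl i) : HSt V) ∉ T) :
    reachN M σ T (m + 1) π =
      (1/2 : ℝ) * reachN M σ T m
        ((π.1, π.2 ++ [(none, if (i : ℕ) = 0 then Sum.inl vinit else hsBot V)]) :
          Hist (HSt V) (HAct V)) +
      (1/2 : ℝ) * reachN M σ T m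
        ((π.1, π.2 ++ [(none, if h' : (i : ℕ) + 1 < Fintype.card V then
            Sum.inr (Sum.inl ⟨(i : ℕ) + 1, h'⟩) else hsB V)]) : Hist (HSt V) (HAct V)) := by
  have h1 : ∀ p : V × V, σ.choice π (some p) = 0 :=
    fun p => σ.supp π (some p) (by rw [h]; exact not_enabled_chain hM i p)
  rw [reachN]
  simp only [h]
  rw [if_neg hT, Fintype.sum_option, choice_tau_chain hM σ π i h]
  simp only [h1, zero_mul, Finset.sum_const_zero, add_zero, one_mul]
  exact sum_P_chain hM i _

end HamAux

section HamAux2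

variable {V : Type*} [Fintype V] [DecidableEq V] [Nonempty V]
variable {E : Set (V × V)} {vinit : V}
variable {M : MDP (HSt V) (HAct V)} (hM : M.P = hamP E vinit)

/-- The set of states from which `s_b` is unreachable. -/
def CB (V : Type*) [Fintype V] : Set (HSt V) :=
  {s | s ≠ hsB V ∧ ∀ i, s ≠ Sum.inr (Sum.inl i)}

/-- The set of states from which `s_a` is unreachable. -/
def CA (V : Type*) [Fintype V] [Nonempty V] : Set (HSt V) :=
  {s | (∀ v, s ≠ Sum.inl v) ∧ s ≠ hsA V ∧ s ≠ hs0 V}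

lemma mem_CB_inl (v : V) : (Sum.inl v : HSt V) ∈ CB V := by
  constructor
  · simp [hsB]
  · intro i; simp

lemma mem_CB_abs (e : Fin 3) (he : e ≠ 2) : (Sum.inr (Sum.inr e) : HSt V) ∈ CB V := by
  constructor
  · simp [hsB, he]
  · intro i; simp

lemma mem_CA_chain (i : Fin (Fintype.card V)) (hi : (i : ℕ) ≠ 0) :
    (Sum.inr (Sum.inl i) : HSt V) ∈ CA V := by
  refine ⟨fun v => by simp, by simp [hsA], ?_⟩
  simp only [hs0, ne_eq, Sum.inr.injEq, Sum.inl.injEq]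
  intro h
  exact hi (by rw [h])

lemma mem_CA_abs (e : Fin 3) (he : e ≠ 1) : (Sum.inr (Sum.inr e) : HSt V) ∈ CA V := by
  exact ⟨fun v => by simp, by simp [hsA, he], by simp [hs0]⟩

include hM

lemma CB_closed : ∀ s ∈ CB V, ∀ (a : HAct V) (s' : HSt V), M.P s a s' ≠ 0 → s' ∈ CB V := by
  rintro s hs a s' hP
  rw [hM] at hP
  match s, a with
  | Sum.inl v, none =>
      have : s' = hsA V := by
        by_contra hne
        exact hP (by simp [hamP, hne])
      subst this
      exact mem_CB_abs 1 (by decide)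
  | Sum.inl v, some (u, u') =>
      have : s' = Sum.inl u' ∨ s' = hsBot V := by
        by_contra hne
        push_neg at hne
        exact hP (by simp [hamP, hne.1, hne.2])
      rcases this with rfl | rfl
      · exact mem_CB_inl u'
      · exact mem_CB_abs 0 (by decide)
  | Sum.inr (Sum.inl i), _ => exact absurd rfl (hs.2 i)
  | Sum.inr (Sum.inr e), none =>
      have : s' = Sum.inr (Sum.inr e) := by
        by_contra hne
        exact hP (by simp [hamP, hne])
      subst this
      exact hs
  | Sum.inr (Sum.inr e), some p => exact absurd (by simp [hamP]) hP

lemma CA_closed : ∀ s ∈ CA V, ∀ (a : HAct V) (s' : HSt V), M.P s a s' ≠ 0 → s' ∈ CA V := by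
  rintro s hs a s' hP
  rw [hM] at hP
  match s, a with
  | Sum.inl v, _ => exact absurd rfl (hs.1 v)
  | Sum.inr (Sum.inl i), some p => exact absurd (by simp [hamP]) hP
  | Sum.inr (Sum.inl i), none =>
      have hi : (i : ℕ) ≠ 0 := by
        intro h0
        exact hs.2.2 (by simp only [hs0]; congr 1; congr 1; exact Fin.ext h0)
      have : s' = (if (i : ℕ) = 0 then Sum.inl vinit else hsBot V) ∨
          s' = (if h : (i : ℕ) + 1 < Fintype.card V then
            Sum.inr (Sum.inl ⟨(i : ℕ) + 1, h⟩) else hsB V) := by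
        by_contra hne
        push_neg at hne
        have h2 := hne.2
        refine hP ?_
        by_cases h : (i : ℕ) + 1 < Fintype.card V
        · rw [dif_pos h] at h2
          have hi' : i ≠ 0 := fun h0 => hi (by simp [h0])
          have h1 := hne.1
          rw [if_neg hi] at h1
          simp [hamP, h1, h, h2, hi']
        · rw [dif_neg h] at h2
          have hi' : i ≠ 0 := fun h0 => hi (by simp [h0])
          have h1 := hne.1
          rw [if_neg hi] at h1
          simp [hamP, h1, h, h2, hi']
      rw [if_neg hi] at this
      rcases this with rfl | rfl
      · exact mem_CA_abs 0 (by decide)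
      · by_cases h : (i : ℕ) + 1 < Fintype.card V
        · rw [dif_pos h]
          exact mem_CA_chain ⟨(i : ℕ) + 1, h⟩ (by simp)
        · rw [dif_neg h]
          exact mem_CA_abs 2 (by decide)
  | Sum.inr (Sum.inr e), some p => exact absurd (by simp [hamP]) hP
  | Sum.inr (Sum.inr e), none =>
      have : s' = Sum.inr (Sum.inr e) := by
        by_contra hne
        exact hP (by simp [hamP, hne])
      subst this
      exact hs

lemma rB_le (σ : Scheduler M) : ∀ (m : ℕ) (i : Fin (Fintype.card V))
    (π : Hist (HSt V) (HAct V)), Hist.last π = Sum.inr (Sum.inl i) →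
    reachN M σ {hsB V} m π ≤ (1/2 : ℝ) ^ (Fintype.card V - (i : ℕ)) := by
  have hdis : ∀ s ∈ CB V, s ∉ ({hsB V} : Set (HSt V)) := fun s hs => by
    simpa using hs.1
  intro m
  induction m with
  | zero =>
      intro i π h
      rw [reachN, h]
      simp only [Set.mem_singleton_iff]
      rw [if_neg (by simp [hsB])]
      positivity
  | succ m ih =>
      intro i π h
      rw [reachN_chain_succ hM σ _ m π i h (by simp [hsB])]
      have hc1 : reachN M σ {hsB V} m
          ((π.1, π.2 ++ [(none, if (i : ℕ) = 0 then Sum.inl vinit else hsBot V)]) :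
            Hist (HSt V) (HAct V)) = 0 := by
        refine reach_invariant (CB V) hdis (CB_closed hM) m _ ?_
        rw [Hist.last_snoc]
        split
        · exact mem_CB_inl vinit
        · exact mem_CB_abs 0 (by decide)
      rw [hc1, mul_zero, zero_add]
      by_cases h2 : (i : ℕ) + 1 < Fintype.card V
      · rw [dif_pos h2]
        have := ih ⟨(i : ℕ) + 1, h2⟩ _ (Hist.last_snoc π none _)
        have harith : Fintype.card V - (i : ℕ) = (Fintype.card V - ((i : ℕ) + 1)) + 1 := by
          omega
        rw [harith, pow_succ]
        simp only [Fin.val_mk] at this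
        nlinarith [this]
      · rw [dif_neg h2]
        have h1 : Fintype.card V - (i : ℕ) = 1 := by have := i.isLt; omega
        rw [h1, pow_one]
        have := reachN_le_one (M := M) (σ := σ) (T := {hsB V}) m
          ((π.1, π.2 ++ [(none, hsB V)]) : Hist (HSt V) (HAct V))
        linarith

lemma rB_eq (σ : Scheduler M) : ∀ (m : ℕ) (i : Fin (Fintype.card V))
    (π : Hist (HSt V) (HAct V)), Hist.last π = Sum.inr (Sum.inl i) →
    Fintype.card V - (i : ℕ) ≤ m →
    reachN M σ {hsB V} m π = (1/2 : ℝ) ^ (Fintype.card V - (i : ℕ)) := by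
  have hdis : ∀ s ∈ CB V, s ∉ ({hsB V} : Set (HSt V)) := fun s hs => by
    simpa using hs.1
  intro m
  induction m with
  | zero =>
      intro i π h hm
      exact absurd hm (by have := i.isLt; omega)
  | succ m ih =>
      intro i π h hm
      rw [reachN_chain_succ hM σ _ m π i h (by simp [hsB])]
      have hc1 : reachN M σ {hsB V} m
          ((π.1, π.2 ++ [(none, if (i : ℕ) = 0 then Sum.inl vinit else hsBot V)]) :
            Hist (HSt V) (HAct V)) = 0 := by
        refine reach_invariant (CB V) hdis (CB_closed hM) m _ ?_
        rw [Hist.last_snoc]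
        split
        · exact mem_CB_inl vinit
        · exact mem_CB_abs 0 (by decide)
      rw [hc1, mul_zero, zero_add]
      by_cases h2 : (i : ℕ) + 1 < Fintype.card V
      · rw [dif_pos h2]
        have := ih ⟨(i : ℕ) + 1, h2⟩ _ (Hist.last_snoc π none _) (by simp only [Fin.val_mk]; omega)
        simp only [Fin.val_mk] at this
        rw [this]
        have harith : Fintype.card V - (i : ℕ) = (Fintype.card V - ((i : ℕ) + 1)) + 1 := by
          omega
        rw [harith, pow_succ]
        ring
      · rw [dif_neg h2]
        have h1 : Fintype.card V - (i : ℕ) = 1 := by have := i.isLt; omega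
        rw [h1, pow_one]
        rw [reachN_mem (by rw [Hist.last_snoc]; simp) m]
        ring

lemma Pr_B (σ : Scheduler M) : Pr M σ (hs0 V) {hsB V} = (1/2 : ℝ) ^ Fintype.card V := by
  have h0 : Hist.last ((hs0 V, []) : Hist (HSt V) (HAct V)) =
      Sum.inr (Sum.inl (⟨0, Fintype.card_pos⟩ : Fin (Fintype.card V))) := rfl
  refine Pr_eq (fun m => ?_) ⟨Fintype.card V, ?_⟩
  · simpa using rB_le hM σ m ⟨0, Fintype.card_pos⟩ _ h0
  · simpa using rB_eq hM σ (Fintype.card V) ⟨0, Fintype.card_pos⟩ _ h0 (by simp)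

end HamAux2

section HamAux3

variable {V : Type*} [Fintype V] [DecidableEq V] [Nonempty V]
variable {E : Set (V × V)} {vinit : V}
variable {M : MDP (HSt V) (HAct V)} (hM : M.P = hamP E vinit)
variable {σ : Scheduler M} (g : HSt V → HAct V) (hg : IsActOf σ g)

/-- The deterministic trajectory through vertices. -/
def vtraj (g : HSt V → HAct V) (vinit : V) : ℕ → V
  | 0 => vinit
  | (i+1) => match g (Sum.inl (vtraj g vinit i)) with
    | some p => p.2
    | none => vtraj g vinit i

lemma inl_notin_Ta (v : V) : (Sum.inl v : HSt V) ∉ ({hsA V} : Set (HSt V)) := by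
  simp [hsA]

lemma hs0_notin_Ta : (hs0 V) ∉ ({hsA V} : Set (HSt V)) := by
  simp [hsA, hs0]

lemma vtraj_succ_of_some {i : ℕ} {v' : V}
    (h : g (Sum.inl (vtraj g vinit i)) = some (vtraj g vinit i, v')) :
    vtraj g vinit (i + 1) = v' := by
  show (match g (Sum.inl (vtraj g vinit i)) with
    | some p => p.2
    | none => vtraj g vinit i) = v'
  rw [h]

include hM hg

lemma g_vertex (v : V) :
    g (Sum.inl v) = none ∨ ∃ v', g (Sum.inl v) = some (v, v') ∧ (v, v') ∈ E := by
  cases hgv : g (Sum.inl v : HSt V) with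
  | none => exact Or.inl rfl
  | some p =>
      obtain ⟨u, u'⟩ := p
      have he := g_enabled g hg (Sum.inl v : HSt V)
      rw [hgv] at he
      obtain ⟨hu, hE⟩ := (enabled_vertex hM).1 he
      subst hu
      exact Or.inr ⟨u', rfl, hE⟩

lemma rA_tau {v : V} (h : g (Sum.inl v) = none) (m : ℕ) :
    reachN M σ {hsA V} (m + 1) ((Sum.inl v : HSt V), []) = 1 := by
  rw [reachN_g' g hg m _ (inl_notin_Ta v), h, sum_P_vertex_tau hM]
  exact reachN_mem (by rw [Hist.last_nil]; simp) m

lemma rA_edge {v v' : V} (h : g (Sum.inl v) = some (v, v')) (hE : (v, v') ∈ E) (m : ℕ) :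
    reachN M σ {hsA V} (m + 1) ((Sum.inl v : HSt V), []) =
      (1/2 : ℝ) * reachN M σ {hsA V} m ((Sum.inl v' : HSt V), []) := by
  rw [reachN_g' g hg m _ (inl_notin_Ta v), h, sum_P_vertex_edge hM hE]
  have hbot : reachN M σ {hsA V} m ((hsBot V, []) : Hist (HSt V) (HAct V)) = 0 := by
    refine reach_invariant (CA V) (fun s hs => by simpa using hs.2.1) (CA_closed hM) m _ ?_
    rw [Hist.last_nil]
    exact mem_CA_abs 0 (by decide)
  rw [hbot, mul_zero, add_zero]

lemma rA_s0 (m : ℕ) : reachN M σ {hsA V} (m + 1) ((hs0 V, []) : Hist (HSt V) (HAct V)) =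
    (1/2 : ℝ) * reachN M σ {hsA V} m ((Sum.inl vinit : HSt V), []) := by
  rw [reachN_chain_succ hM σ _ m ((hs0 V, []) : Hist (HSt V) (HAct V)) ⟨0, Fintype.card_pos⟩ rfl hs0_notin_Ta]
  have hc2 : reachN M σ {hsA V} m
      (((hs0 V, []) : Hist (HSt V) (HAct V)).1, ((hs0 V, []) : Hist (HSt V) (HAct V)).2 ++
        [(none, if h' : ((⟨0, Fintype.card_pos⟩ : Fin (Fintype.card V)) : ℕ) + 1 <
            Fintype.card V then
          Sum.inr (Sum.inl ⟨((⟨0, Fintype.card_pos⟩ : Fin (Fintype.card V)) : ℕ) + 1, h'⟩)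
          else hsB V)]) = 0 := by
    refine reach_invariant (CA V) (fun s hs => by simpa using hs.2.1) (CA_closed hM) m _ ?_
    rw [Hist.last_snoc]
    split
    · exact mem_CA_chain _ (by simp)
    · exact mem_CA_abs 2 (by decide)
  rw [hc2, mul_zero, add_zero]
  have h0 : ((if ((⟨0, Fintype.card_pos⟩ : Fin (Fintype.card V)) : ℕ) = 0 then
      Sum.inl vinit else hsBot V) : HSt V) = Sum.inl vinit := if_pos rfl
  rw [h0]
  congr 1
  exact reachN_congr g hg m _ _ (by rw [Hist.last_snoc, Hist.last_nil])


lemma Pr_A_of_tau (k : ℕ) (hk : g (Sum.inl (vtraj g vinit k)) = none)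
    (hfar : ∀ i < k, g (Sum.inl (vtraj g vinit i)) ≠ none) :
    Pr M σ (hs0 V) ({hsA V} : Set (HSt V)) = (1/2 : ℝ) ^ (k + 1) ∧
      ∀ i < k, (vtraj g vinit i, vtraj g vinit (i + 1)) ∈ E := by
  set w := vtraj g vinit with hw
  have hsome : ∀ i < k, g (Sum.inl (w i)) = some (w i, w (i + 1)) ∧ (w i, w (i + 1)) ∈ E := by
    intro i hi
    rcases g_vertex hM g hg (w i) with h | ⟨v', hgv, hE⟩
    · exact absurd h (hfar i hi)
    · have hwv : w (i + 1) = v' := vtraj_succ_of_some g hgv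
      rw [hwv]
      exact ⟨hgv, hE⟩
  have hle : ∀ m, ∀ i ≤ k, reachN M σ {hsA V} m ((Sum.inl (w i) : HSt V), []) ≤
      (1/2 : ℝ) ^ (k - i) := by
    intro m
    induction m with
    | zero =>
        intro i hi
        rw [reachN, if_neg (by rw [Hist.last_nil]; exact inl_notin_Ta _)]
        positivity
    | succ m ih =>
        intro i hi
        rcases eq_or_lt_of_le hi with rfl | hik
        · rw [rA_tau hM g hg hk m]
          simp
        · rw [rA_edge hM g hg (hsome i hik).1 (hsome i hik).2 m]
          have hih := ih (i + 1) hik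
          have harith : k - i = (k - (i + 1)) + 1 := by omega
          rw [harith, pow_succ]
          nlinarith [hih]
  have heq : ∀ m, ∀ i ≤ k, k - i < m →
      reachN M σ {hsA V} m ((Sum.inl (w i) : HSt V), []) = (1/2 : ℝ) ^ (k - i) := by
    intro m
    induction m with
    | zero => intro i hi h; exact absurd h (Nat.not_lt_zero _)
    | succ m ih =>
        intro i hi h
        rcases eq_or_lt_of_le hi with rfl | hik
        · rw [rA_tau hM g hg hk m]
          simp
        · rw [rA_edge hM g hg (hsome i hik).1 (hsome i hik).2 m,
            ih (i + 1) hik (by omega)]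
          have harith : k - i = (k - (i + 1)) + 1 := by omega
          rw [harith, pow_succ]
          ring
  constructor
  · refine Pr_eq (fun m => ?_) ⟨k + 2, ?_⟩
    · cases m with
      | zero =>
          rw [reachN, if_neg (by rw [Hist.last_nil]; exact hs0_notin_Ta)]
          positivity
      | succ m =>
          rw [rA_s0 hM g hg m]
          have : reachN M σ {hsA V} m ((Sum.inl vinit : HSt V), []) ≤ (1/2 : ℝ) ^ k := by
            simpa [hw, vtraj] using hle m 0 (Nat.zero_le k)
          rw [pow_succ]
          nlinarith [this]
    · rw [rA_s0 hM g hg (k + 1)]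
      have : reachN M σ {hsA V} (k + 1) ((Sum.inl vinit : HSt V), []) = (1/2 : ℝ) ^ k := by
        simpa [hw, vtraj] using heq (k + 1) 0 (Nat.zero_le k) (by omega)
      rw [this, pow_succ]
      ring
  · exact fun i hi => (hsome i hi).2

lemma Pr_A_of_no_tau (hall : ∀ i, g (Sum.inl (vtraj g vinit i)) ≠ none) :
    Pr M σ (hs0 V) ({hsA V} : Set (HSt V)) = 0 := by
  set w := vtraj g vinit with hw
  have h0 : ∀ m i, reachN M σ {hsA V} m ((Sum.inl (w i) : HSt V), []) = 0 := by
    intro m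
    induction m with
    | zero =>
        intro i
        rw [reachN, if_neg (by rw [Hist.last_nil]; exact inl_notin_Ta _)]
    | succ m ih =>
        intro i
        rcases g_vertex hM g hg (w i) with h | ⟨v', hgv, hE⟩
        · exact absurd h (hall i)
        · have hwv : w (i + 1) = v' := vtraj_succ_of_some g hgv
          rw [rA_edge hM g hg hgv hE m, ← hwv, ih (i + 1), mul_zero]
  refine Pr_eq (fun m => ?_) ⟨0, ?_⟩
  · cases m with
    | zero =>
        rw [reachN, if_neg (by rw [Hist.last_nil]; exact hs0_notin_Ta)]
    | succ m =>
        rw [rA_s0 hM g hg m]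
        have := h0 m 0
        simp only [hw] at this
        rw [show vtraj g vinit 0 = vinit from rfl] at this
        rw [this, mul_zero]
  · rw [reachN, if_neg (by rw [Hist.last_nil]; exact hs0_notin_Ta)]

end HamAux3

/-- For every `0 ≤ ε < 1/2^{|V|+1}`: `G` has a Hamiltonian path starting
at `vinit` iff there are two memoryless deterministic schedulers `σ₁, σ₂` of the reduction
MDP with `|Pr^{σ₁}_{s₀}(◇{s_a}) − Pr^{σ₂}_{s₀}(◇{s_b})| ≤ ε`. -/
theorem hamiltonian_iff_two_MD_approx_equal
    {V : Type*} [Fintype V] [DecidableEq V] [Nonempty V]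
    (E : Set (V × V)) (vinit : V)
    (M : MDP (HSt V) (HAct V)) (hM : M.P = hamP E vinit)
    (ε : ℝ) (hε0 : 0 ≤ ε) (hε : ε < 1 / 2 ^ (Fintype.card V + 1)) :
    (∃ l : List V, IsHamPath E vinit l) ↔
      ∃ σ₁ σ₂ : Scheduler M, σ₁.MD ∧ σ₂.MD ∧
        |Pr M σ₁ (hs0 V) ({hsA V} : Set (HSt V)) -
          Pr M σ₂ (hs0 V) ({hsB V} : Set (HSt V))| ≤ ε := by
  have hn1 : 1 ≤ Fintype.card V := Fintype.card_pos
  have hεpow : ε < (1/2 : ℝ) ^ (Fintype.card V + 1) := by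
    rw [one_div_pow]
    exact hε
  constructor
  · rintro ⟨l, hnd, hlen, hhead, hchain⟩
    have hlpos : 0 < l.length := by omega
    have hmem : ∀ v : V, v ∈ l := by
      intro v
      have h1 : l.toFinset = Finset.univ :=
        Finset.eq_univ_of_card _ (by rw [List.toFinset_card_of_nodup hnd, hlen])
      rw [← List.mem_toFinset, h1]
      exact Finset.mem_univ v
    -- the MD action-selection function following the Hamiltonian path
    classical
    have hidxD : ∀ i, i < l.length → l.idxOf (l.getD i vinit) = i := by
      intro i hi
      rw [List.getD_eq_getElem l vinit hi]
      exact List.Nodup.idxOf_getElem hnd i hi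
    set f : HSt V → HAct V := fun s => match s with
      | Sum.inl v =>
          if l.idxOf v + 1 < l.length then some (v, l.getD (l.idxOf v + 1) vinit)
          else none
      | _ => none with hf
    have hfeq : ∀ v : V, f (Sum.inl v) =
        (if l.idxOf v + 1 < l.length then some (v, l.getD (l.idxOf v + 1) vinit)
          else none) := fun v => rfl
    have hfen : ∀ s : HSt V, M.enabled s (f s) := by
      intro s
      match s with
      | Sum.inl v =>
          rw [hfeq]
          by_cases h : l.idxOf v + 1 < l.length
          · rw [if_pos h]
            refine (enabled_vertex hM).2 ⟨rfl, ?_⟩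
            have h2 := List.isChain_iff_getElem.1 hchain (l.idxOf v) (by omega)
            have h3 : l[l.idxOf v]'(by omega) = v := List.getElem_idxOf (by omega)
            rw [h3] at h2
            rw [List.getD_eq_getElem l vinit h]
            exact h2
          · rw [if_neg h]
            exact enabled_tau hM _
      | Sum.inr s' => exact enabled_tau hM _
    set c : Hist (HSt V) (HAct V) → HAct V → ℝ :=
      fun π a => @ite ℝ (a = f (Hist.last π)) (Classical.propDecidable _) 1 0 with hc
    set σ₁ : Scheduler M :=
      { choice := c
        nonneg := fun π a => by
          simp only [hc]
          split <;> norm_num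
        sum_one := fun π => by
          simp only [hc]
          have hz : ∀ b : HAct V, b ≠ f (Hist.last π) →
              (@ite ℝ (b = f (Hist.last π)) (Classical.propDecidable _) 1 0) = 0 :=
            fun b hb => if_neg hb
          rw [Fintype.sum_eq_single _ hz]
          exact if_pos rfl
        supp := fun π a hna => by
          simp only [hc]
          rcases eq_or_ne a (f (Hist.last π)) with rfl | h
          · exact absurd (hfen _) hna
          · exact if_neg h } with hσ₁
    have hchoice : ∀ π a, σ₁.choice π a =
        @ite ℝ (a = f (Hist.last π)) (Classical.propDecidable _) 1 0 := fun π a => rfl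
    have hg₁ : IsActOf σ₁ f := fun _ _ => rfl
    have hMD : σ₁.MD := by
      constructor
      · intro π π' h
        funext a
        rw [hchoice, hchoice, h]
      · intro π a
        rw [hchoice]
        by_cases h : a = f (Hist.last π)
        · right; exact if_pos h
        · left; exact if_neg h
    -- the trajectory follows the list
    have htraj : ∀ i, i < l.length → vtraj f vinit i = l.getD i vinit := by
      intro i
      induction i with
      | zero =>
          intro hi
          cases l with
          | nil => simp at hi
          | cons a t =>
              simp only [List.head?_cons, Option.some.injEq] at hhead
              simp [vtraj, List.getD, hhead]
      | succ i ih =>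
          intro hi
          have hi' : i < l.length := by omega
          have hv := ih hi'
          have hidx : l.idxOf (vtraj f vinit i) = i := by
            rw [hv]
            exact hidxD i hi'
          have hsome : f (Sum.inl (vtraj f vinit i)) =
              some (vtraj f vinit i, l.getD (i + 1) vinit) := by
            rw [hfeq, hidx, if_pos hi]
          exact vtraj_succ_of_some f hsome
    have hk : f (Sum.inl (vtraj f vinit (Fintype.card V - 1))) = none := by
      rw [hfeq, if_neg]
      rw [htraj (Fintype.card V - 1) (by omega), hidxD (Fintype.card V - 1) (by omega)]
      omega
    have hfar : ∀ i < Fintype.card V - 1, f (Sum.inl (vtraj f vinit i)) ≠ none := by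
      intro i hi
      rw [hfeq, if_pos]
      · simp
      · rw [htraj i (by omega), hidxD i (by omega)]
        omega
    obtain ⟨hPrA, -⟩ := Pr_A_of_tau hM f hg₁ (Fintype.card V - 1) hk hfar
    refine ⟨σ₁, σ₁, hMD, hMD, ?_⟩
    rw [hPrA, Pr_B hM σ₁, show Fintype.card V - 1 + 1 = Fintype.card V from by omega,
      sub_self, abs_zero]
    exact hε0
  · rintro ⟨σ₁, σ₂, hσ₁, hσ₂, hdiff⟩
    obtain ⟨g, hg⟩ := exists_actfun hσ₁
    rw [Pr_B hM σ₂] at hdiff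
    by_cases hex : ∃ i, g (Sum.inl (vtraj g vinit i)) = none
    · classical
      set k := Nat.find hex with hkdef
      have hk : g (Sum.inl (vtraj g vinit k)) = none := Nat.find_spec hex
      have hfar : ∀ i < k, g (Sum.inl (vtraj g vinit i)) ≠ none :=
        fun i hi => Nat.find_min hex hi
      obtain ⟨hPrA, hedge⟩ := Pr_A_of_tau hM g hg k hk hfar
      rw [hPrA] at hdiff
      have habs := abs_le.1 hdiff
      have hp2 : (0:ℝ) < (1/2 : ℝ) ^ (Fintype.card V + 1) := by positivity
      have hkn : k + 1 = Fintype.card V := by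
        by_contra hne
        rcases lt_or_gt_of_ne hne with hlt | hgt
        · have h1 : (1/2 : ℝ) ^ (Fintype.card V - 1) ≤ (1/2) ^ (k + 1) :=
            pow_le_pow_of_le_one (by norm_num) (by norm_num) (by omega)
          have h2 : (1/2 : ℝ) ^ Fintype.card V = (1/2) ^ (Fintype.card V - 1) * (1/2) := by
            rw [← pow_succ]
            congr 1
            omega
          have h3 : (1/2 : ℝ) ^ (Fintype.card V + 1) = (1/2) ^ Fintype.card V * (1/2) :=
            pow_succ _ _
          nlinarith [habs.2, hεpow]
        · have h1 : (1/2 : ℝ) ^ (k + 1) ≤ (1/2) ^ (Fintype.card V + 1) :=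
            pow_le_pow_of_le_one (by norm_num) (by norm_num) (by omega)
          have h3 : (1/2 : ℝ) ^ (Fintype.card V + 1) = (1/2) ^ Fintype.card V * (1/2) :=
            pow_succ _ _
          nlinarith [habs.1, hεpow]
      -- derive the successor relation along the trajectory
      have hsome : ∀ i < k, g (Sum.inl (vtraj g vinit i)) =
          some (vtraj g vinit i, vtraj g vinit (i + 1)) := by
        intro i hi
        rcases g_vertex hM g hg (vtraj g vinit i) with h | ⟨v', hgv, hE⟩
        · exact absurd h (hfar i hi)
        · rw [hgv, vtraj_succ_of_some g hgv]
      -- injectivity of the trajectory up to time k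
      have key : ∀ d i j, i < j → j + d ≤ k → vtraj g vinit i = vtraj g vinit j →
          vtraj g vinit (i + d) = vtraj g vinit (j + d) := by
        intro d
        induction d with
        | zero => intro i j _ _ h; simpa using h
        | succ d ih =>
            intro i j hij hjd h
            have h' := ih i j hij (by omega) h
            have h1 := hsome (i + d) (by omega)
            have h2 := hsome (j + d) (by omega)
            rw [h'] at h1
            rw [h2] at h1
            have h4 := congrArg Prod.snd (Option.some.inj h1)
            simp only at h4
            show vtraj g vinit (i + d + 1) = vtraj g vinit (j + d + 1)
            exact h4.symm
      have hinj : ∀ x y, x ≤ k → y ≤ k → vtraj g vinit x = vtraj g vinit y → x = y := by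
        have main : ∀ x y, x < y → y ≤ k → vtraj g vinit x = vtraj g vinit y → False := by
          intro x y hxy hyk hv
          have h := key (k - y) x y hxy (by omega) hv
          rw [show y + (k - y) = k from by omega] at h
          have hs := hsome (x + (k - y)) (by omega)
          rw [h, hk] at hs
          exact absurd hs (by simp)
        intro x y hx hy hv
        by_contra hne
        rcases lt_or_gt_of_ne hne with hlt | hlt
        · exact main x y hlt hy hv
        · exact main y x hlt hx hv.symm
      refine ⟨(List.range (Fintype.card V)).map (vtraj g vinit), ?_, ?_, ?_, ?_⟩
      · refine List.Nodup.map_on ?_ List.nodup_range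
        intro x hx y hy h
        exact hinj x y (by simp only [List.mem_range] at hx; omega)
          (by simp only [List.mem_range] at hy; omega) h
      · simp
      · obtain ⟨m, hm⟩ : ∃ m, Fintype.card V = m + 1 := ⟨Fintype.card V - 1, by omega⟩
        rw [hm, List.range_succ_eq_map]
        rfl
      · refine List.isChain_iff_getElem.2 (fun i hi => ?_)
        simp only [List.length_map, List.length_range] at hi
        simp only [List.get_eq_getElem, List.getElem_map, List.getElem_range]
        exact hedge i (by omega)
    · push_neg at hex
      have h0 := Pr_A_of_no_tau hM g hg hex
      rw [h0] at hdiff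
      exfalso
      rw [zero_sub, abs_neg, abs_of_nonneg (by positivity)] at hdiff
      have hlt : (1/2 : ℝ) ^ (Fintype.card V + 1) < (1/2) ^ Fintype.card V :=
        pow_lt_pow_right_of_lt_one₀ (by norm_num) (by norm_num) (by omega)
      linarith
end

section
/- Let M be an MDP with state set S, let 𝒯 = {T₁,…,T_m} be a set of m target sets all of which are absorbing, let M_𝒯 be the goal unfolding of M w.r.t. 𝒯, and let s ∈ S. Then the set of states of M_𝒯 reachable from (s,∅) is contained in (S × {∅}) ∪ ⋃_{i=1}^m (Tᵢ × {𝒰 ⊆ 𝒯 : Tᵢ ∈ 𝒰}) restricted to reachable configurations, and its cardinality is at most |S| + Σ_{i=1}^m |Tᵢ| ≤ (m+1)·|S|. -/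
open scoped BigOperators Classical
open Filter

/-- Transition probabilities of the goal unfolding of `M` with respect to the (indexed)
family of target sets `T : ι → Set S`: states are pairs `(s, 𝒰)` where `𝒰` records the
indices of the target sets already visited. -/
noncomputable def unfoldP {S A ι : Type*} [Fintype S] [Fintype A] [Fintype ι]
    (M : MDP S A) (T : ι → Set S) :
    (S × Finset ι) → A → (S × Finset ι) → ℝ := fun x a y =>
  if y.2 = x.2 ∪ Finset.univ.filter (fun i => x.1 ∈ T i) then M.P x.1 a y.1 else 0

/-- One positive-probability step of the goal unfolding. -/
def UnfoldStep {S A ι : Type*} [Fintype S] [Fintype A] [Fintype ι]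
    (M : MDP S A) (T : ι → Set S) (x y : S × Finset ι) : Prop :=
  ∃ a : A, 0 < unfoldP M T x a y


section AuxProof

variable {S A : Type*} [Fintype S] [Fintype A] {m : ℕ} {M : MDP S A} {T : Fin m → Set S}

/-- The set of target indices containing a state. -/
noncomputable def goalSet (T : Fin m → Set S) (t : S) : Finset (Fin m) :=
  Finset.univ.filter (fun i => t ∈ T i)

lemma unfoldStep_spec {x y : S × Finset (Fin m)} (h : UnfoldStep M T x y) :
    y.2 = x.2 ∪ goalSet T x.1 ∧ ∃ a, 0 < M.P x.1 a y.1 := by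
  obtain ⟨a, ha⟩ := h
  unfold unfoldP at ha
  split_ifs at ha with hc
  · refine ⟨?_, a, ha⟩
    rw [hc]
    ext j
    simp [goalSet, Finset.mem_union]
  · exact absurd ha (lt_irrefl 0)

lemma step_fix (habs : ∀ i, ∀ t ∈ T i, M.Absorbing t)
    {x y : S × Finset (Fin m)} (h : UnfoldStep M T x y) {i : Fin m} (hx : x.1 ∈ T i) :
    y.1 = x.1 := by
  obtain ⟨-, a, hp⟩ := unfoldStep_spec h
  have hen : M.enabled x.1 a := by
    rcases M.sum_cases x.1 a with h1 | h0
    · exact h1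
    · have := (Finset.sum_eq_zero_iff_of_nonneg
        (fun s' _ => M.nonneg x.1 a s')).mp h0 y.1 (Finset.mem_univ _)
      exact absurd this (ne_of_gt hp)
  have habs1 : M.P x.1 a x.1 = 1 := habs i x.1 hx a hen
  by_contra hne
  have hsum := hen
  unfold MDP.enabled at hsum
  have hsplit : M.P x.1 a x.1 + ∑ s' ∈ Finset.univ.erase x.1, M.P x.1 a s'
      = ∑ s', M.P x.1 a s' :=
    Finset.add_sum_erase Finset.univ (M.P x.1 a) (Finset.mem_univ x.1)
  have hrest : ∑ s' ∈ Finset.univ.erase x.1, M.P x.1 a s' = 0 := by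
    rw [hsum, habs1] at hsplit; linarith
  have hzero : M.P x.1 a y.1 = 0 :=
    (Finset.sum_eq_zero_iff_of_nonneg (fun s' _ => M.nonneg x.1 a s')).mp hrest y.1
      (Finset.mem_erase.mpr ⟨hne, Finset.mem_univ _⟩)
  exact absurd hzero (ne_of_gt hp)

lemma unfold_invariant (habs : ∀ i, ∀ t ∈ T i, M.Absorbing t) (s : S)
    {y : S × Finset (Fin m)}
    (h : Relation.ReflTransGen (UnfoldStep M T) (s, (∅ : Finset (Fin m))) y) :
    y.2 = ∅ ∨ ((∃ i, y.1 ∈ T i) ∧ y.2 = goalSet T y.1) := by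
  induction h with
  | refl => left; rfl
  | @tail b c hab hbc ih =>
    obtain ⟨hc2, -⟩ := unfoldStep_spec hbc
    by_cases hbT : ∃ i, b.1 ∈ T i
    · obtain ⟨i, hi⟩ := hbT
      have hfix : c.1 = b.1 := step_fix habs hbc hi
      right
      refine ⟨⟨i, hfix ▸ hi⟩, ?_⟩
      rcases ih with h0 | ⟨-, hg⟩
      · rw [hc2, h0, Finset.empty_union, hfix]
      · rw [hc2, hg, Finset.union_self, hfix]
    · push_neg at hbT
      have hgb : goalSet T b.1 = ∅ := by
        apply Finset.filter_eq_empty_iff.mpr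
        intro i _
        exact hbT i
      have hb2 : b.2 = ∅ := by
        rcases ih with h0 | ⟨⟨i, hi⟩, -⟩
        · exact h0
        · exact absurd hi (hbT i)
      left
      rw [hc2, hb2, hgb, Finset.empty_union]

lemma ncard_finset_biUnion_le (s : Finset (Fin m)) (f : Fin m → Set S) :
    (⋃ i ∈ s, f i).ncard ≤ ∑ i ∈ s, (f i).ncard := by
  classical
  induction s using Finset.induction_on with
  | empty => simp
  | @insert a s ha ih =>
    rw [Finset.set_biUnion_insert, Finset.sum_insert ha]
    exact le_trans (Set.ncard_union_le _ _) (Nat.add_le_add_left ih _)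

end AuxProof

/-- If all target sets `T₁, …, T_m` are absorbing, then the states of
the goal unfolding reachable from `(s, ∅)` are contained in
`(S × {∅}) ∪ ⋃ᵢ (Tᵢ × {𝒰 : i ∈ 𝒰})`, and their number is at most
`|S| + Σᵢ |Tᵢ| ≤ (m+1)·|S|`. -/
theorem unfolding_reachable_small_for_absorbing_targets
    {S A : Type*} [Fintype S] [Fintype A] [Nonempty S] [Nonempty A]
    (M : MDP S A) {m : ℕ} (hm : 1 ≤ m) (T : Fin m → Set S)
    (habs : ∀ i, ∀ t ∈ T i, M.Absorbing t) (s : S) :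
    {y : S × Finset (Fin m) |
        Relation.ReflTransGen (UnfoldStep M T) (s, (∅ : Finset (Fin m))) y} ⊆
      (Set.univ ×ˢ ({(∅ : Finset (Fin m))} : Set (Finset (Fin m)))) ∪
        ⋃ i : Fin m, (T i) ×ˢ {𝒰 : Finset (Fin m) | i ∈ 𝒰} ∧
    {y : S × Finset (Fin m) |
        Relation.ReflTransGen (UnfoldStep M T) (s, (∅ : Finset (Fin m))) y}.ncard ≤
      Fintype.card S + ∑ i : Fin m, (T i).ncard ∧
    Fintype.card S + ∑ i : Fin m, (T i).ncard ≤ (m + 1) * Fintype.card S := by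
  set R := {y : S × Finset (Fin m) |
      Relation.ReflTransGen (UnfoldStep M T) (s, (∅ : Finset (Fin m))) y} with hR
  have hinv : ∀ y ∈ R, y.2 = ∅ ∨ ((∃ i, y.1 ∈ T i) ∧ y.2 = goalSet T y.1) :=
    fun y hy => unfold_invariant habs s hy
  have hsub : R ⊆ ((fun t : S => (t, (∅ : Finset (Fin m)))) '' Set.univ) ∪
      ((fun t : S => (t, goalSet T t)) '' (⋃ i, T i)) := by
    intro y hy
    rcases hinv y hy with h0 | ⟨⟨i, hi⟩, hg⟩
    · left; exact ⟨y.1, Set.mem_univ _, by rw [← h0]⟩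
    · right
      refine ⟨y.1, Set.mem_iUnion.mpr ⟨i, hi⟩, ?_⟩
      show (y.1, goalSet T y.1) = y
      exact Prod.ext rfl hg.symm
  refine ⟨?_, ?_, ?_⟩
  · intro y hy
    rcases hinv y hy with h0 | ⟨⟨i, hi⟩, hg⟩
    · left; exact ⟨Set.mem_univ _, h0⟩
    · right
      refine Set.mem_iUnion.mpr ⟨i, hi, ?_⟩
      show i ∈ y.2
      rw [hg]
      exact Finset.mem_filter.mpr ⟨Finset.mem_univ _, hi⟩
  · have h1 : R.ncard ≤ (((fun t : S => (t, (∅ : Finset (Fin m)))) '' Set.univ) ∪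
        ((fun t : S => (t, goalSet T t)) '' (⋃ i, T i))).ncard :=
      Set.ncard_le_ncard hsub (Set.toFinite _)
    have h2 : ((fun t : S => (t, (∅ : Finset (Fin m)))) '' Set.univ).ncard = Fintype.card S := by
      rw [Set.ncard_image_of_injective _ (fun a b h => congrArg Prod.fst h),
        Set.ncard_univ, Nat.card_eq_fintype_card]
    have h3 : ((fun t : S => (t, goalSet T t)) '' (⋃ i, T i)).ncard ≤
        ∑ i : Fin m, (T i).ncard := by
      refine le_trans (Set.ncard_image_le (Set.toFinite _)) ?_
      have heq : (⋃ i, T i) = ⋃ i ∈ (Finset.univ : Finset (Fin m)), T i := by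
        ext t; simp
      rw [heq]
      exact ncard_finset_biUnion_le _ _
    calc R.ncard ≤ _ := h1
      _ ≤ ((fun t : S => (t, (∅ : Finset (Fin m)))) '' Set.univ).ncard +
          ((fun t : S => (t, goalSet T t)) '' (⋃ i, T i)).ncard := Set.ncard_union_le _ _
      _ ≤ Fintype.card S + ∑ i : Fin m, (T i).ncard := by rw [h2]; exact Nat.add_le_add_left h3 _
  · have hle : ∀ i : Fin m, (T i).ncard ≤ Fintype.card S := fun i => by
      simpa [Set.ncard_univ, Nat.card_eq_fintype_card] using
        Set.ncard_le_ncard (Set.subset_univ (T i)) (Set.toFinite _)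
    have hsum : ∑ i : Fin m, (T i).ncard ≤ m * Fintype.card S := by
      calc ∑ i : Fin m, (T i).ncard ≤ ∑ _i : Fin m, Fintype.card S :=
            Finset.sum_le_sum (fun i _ => hle i)
        _ = m * Fintype.card S := by simp [Finset.sum_const, Finset.card_univ, mul_comm]
    calc Fintype.card S + ∑ i : Fin m, (T i).ncard
        ≤ Fintype.card S + m * Fintype.card S := Nat.add_le_add_left hsum _
      _ = (m + 1) * Fintype.card S := by ring
end
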